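/- Under hypothesis (a.5), there exists a constant C' > 0 and an exponent α > 1 such that γ''(t) ≥ C'/t^{1+α} for all t ∈ (0, t₀), where α = log(2/(1+ε))/log(1+ε). -/

import Mathlib

open Real Set

/-- under (a.5), γ''(t) ≥ C'/t^{1+α} on (0,t₀), with
    α = log(2/(1+ε))/log(1+ε) > 1. -/
theorem stmt_2
    (γ'' : ℝ → ℝ)
    (hpos : ∀ t ∈ Ioc (0:ℝ) 1, 0 < γ'' t)
    (hanti : StrictAntiOn γ'' (Ioc (0:ℝ) 1))
    (ε t₀ : ℝ) (hε : 0 < ε) (hε2 : (1 + ε)^2 < 2)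
    (ht₀ : t₀ ∈ Ioc (0:ℝ) 1)
    (ha5 : ∀ t : ℝ, 0 < t → t < t₀ → γ'' t ≥ 2 * γ'' ((1 + ε) * t)) :
    Real.log (2 / (1 + ε)) / Real.log (1 + ε) > 1 ∧
    ∃ C' : ℝ, 0 < C' ∧ ∀ t : ℝ, 0 < t → t < t₀ →
      γ'' t ≥ C' / t ^ (1 + Real.log (2 / (1 + ε)) / Real.log (1 + ε)) := by
  classical
  obtain ⟨ht₀pos, ht₀le⟩ := ht₀
  have h1ε : (1:ℝ) < 1 + ε := by linarith
  have h0ε : (0:ℝ) < 1 + ε := by linarith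
  have hlog : 0 < Real.log (1+ε) := Real.log_pos h1ε
  set α := Real.log (2 / (1 + ε)) / Real.log (1 + ε) with hα
  have hfrac : (1+ε) < 2/(1+ε) := by
    rw [lt_div_iff₀ h0ε]; nlinarith
  have hαgt : α > 1 := by
    rw [hα, gt_iff_lt, lt_div_iff₀ hlog, one_mul]
    exact Real.log_lt_log h0ε hfrac
  refine ⟨hαgt, ?_⟩
  have hsum : (1:ℝ) + α = Real.log 2 / Real.log (1+ε) := by
    rw [hα, Real.log_div (by norm_num) (by linarith)]
    field_simp
    ring
  have hkey : (1+ε) ^ ((1:ℝ)+α) = 2 := by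
    rw [hsum, Real.rpow_def_of_pos h0ε, mul_comm, div_mul_cancel₀ _ hlog.ne']
    exact Real.exp_log (by norm_num)
  have hγt₀ : 0 < γ'' t₀ := hpos t₀ ⟨ht₀pos, ht₀le⟩
  -- iteration
  have hiter : ∀ n : ℕ, ∀ t : ℝ, 0 < t → (1+ε)^n * t < t₀ →
      γ'' t ≥ 2^n * γ'' ((1+ε)^n * t) := by
    intro n
    induction n with
    | zero => intro t ht h; simp
    | succ n ih =>
      intro t ht h
      have hpow : (0:ℝ) < (1+ε)^n := pow_pos h0ε n
      have hmul : (1+ε)^n * t < t₀ := by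
        have h1 : (1+ε)^n * t < (1+ε)^(n+1) * t := by
          have : (1+ε)^n < (1+ε)^(n+1) :=
            pow_lt_pow_right₀ h1ε (Nat.lt_succ_self n)
          nlinarith
        linarith
      have h1 := ih t ht hmul
      have h2 := ha5 ((1+ε)^n * t) (by positivity) hmul
      calc γ'' t ≥ 2^n * γ'' ((1+ε)^n * t) := h1
        _ ≥ 2^n * (2 * γ'' ((1+ε) * ((1+ε)^n * t))) :=
            mul_le_mul_of_nonneg_left h2 (by positivity)
        _ = 2^(n+1) * γ'' ((1+ε)^(n+1) * t) := by ring_nf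
  refine ⟨γ'' t₀ * t₀ ^ ((1:ℝ)+α) / 2, by positivity, ?_⟩
  intro t ht htlt
  have hP : ∃ n : ℕ, t₀ ≤ (1+ε)^n * t := by
    obtain ⟨n, hn⟩ := pow_unbounded_of_one_lt (t₀/t) h1ε
    exact ⟨n, by rw [div_lt_iff₀ ht] at hn; linarith⟩
  set n := Nat.find hP with hn
  have hnspec : t₀ ≤ (1+ε)^n * t := Nat.find_spec hP
  have hn0 : n ≠ 0 := by
    intro h
    rw [h] at hnspec; simp at hnspec; linarith
  obtain ⟨m, hm⟩ := Nat.exists_eq_succ_of_ne_zero hn0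
  rw [hm] at hnspec
  have hmlt : (1+ε)^m * t < t₀ := by
    have := Nat.find_min hP (show m < Nat.find hP by omega)
    push_neg at this
    exact this
  have hsm : (0:ℝ) < (1+ε)^m * t := by positivity
  have h1 : γ'' t ≥ 2^m * γ'' ((1+ε)^m * t) := hiter m t ht hmlt
  have h2 : γ'' t₀ ≤ γ'' ((1+ε)^m * t) :=
    (hanti ⟨hsm, by linarith⟩ ⟨ht₀pos, ht₀le⟩ hmlt).le
  have h3 : γ'' t ≥ 2^m * γ'' t₀ := by
    refine le_trans (mul_le_mul_of_nonneg_left h2 (by positivity)) h1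
  have h2n : (((1+ε)^(m+1) : ℝ)) ^ ((1:ℝ)+α) = 2^(m+1) := by
    rw [← Real.rpow_natCast (1+ε) (m+1), ← Real.rpow_mul h0ε.le, mul_comm,
      Real.rpow_mul h0ε.le, hkey, Real.rpow_natCast]
  have hdiv : (t₀/t) ^ ((1:ℝ)+α) ≤ 2^(m+1) := by
    rw [← h2n]
    apply Real.rpow_le_rpow (by positivity) _ (by linarith)
    rw [div_le_iff₀ ht]; exact hnspec
  have heq : γ'' t₀ * t₀ ^ ((1:ℝ)+α) / 2 / t ^ ((1:ℝ)+α)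
      = γ'' t₀ * (t₀/t) ^ ((1:ℝ)+α) / 2 := by
    rw [Real.div_rpow ht₀pos.le ht.le]
    field_simp
  calc γ'' t₀ * t₀ ^ ((1:ℝ)+α) / 2 / t ^ ((1:ℝ)+α)
      = γ'' t₀ * (t₀/t) ^ ((1:ℝ)+α) / 2 := heq
    _ ≤ γ'' t₀ * 2^(m+1) / 2 := by
        have := mul_le_mul_of_nonneg_left hdiv hγt₀.le
        linarith
    _ = 2^m * γ'' t₀ := by ring
    _ ≤ γ'' t := h3
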